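/- Let p, q ∈ AP be distinct and let f be the signal with q ∈ f(t) for all t ≥ 0 and p ∈ f(t) if and only if t = 1/2^n for some n ∈ ℕ. Let φ := (N q) ∧ ¬(p U_(0,1) q) ∧ ¬((¬p) U_(0,1) q), where N ψ := ψ R_(0,∞) ψ. Then: (a) f is finitely variable from the left with respect to every atomic proposition (under the new semantics); (b) f ⊨ φ under the new semantics and f ⊨old φ under the old semantics; and (c) nnf(φ) = (q R_(0,∞) q) ∧ ((¬p) R_(0,1) (¬q)) ∧ (p R_(0,1) (¬q)) is unsatisfiable: no signal g satisfies nnf(φ) under the new semantics, and no signal g satisfies it under the old semantics. -/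

import Mathlib

open scoped NNReal ENNReal
open Set

namespace MITL

/-- A signal assigns to each nonnegative real time the set of atomic
propositions true at that time. -/
abbrev Signal (AP : Type*) := ℝ≥0 → Set AP

/-- The shifted signal `f^r`, defined by `f^r(t) = f(r+t)`. -/
def shift {AP : Type*} (f : Signal AP) (r : ℝ≥0) : Signal AP := fun t => f (r + t)

/-- MTL formulas over atomic propositions `AP`; the timing constraints are
(intended to be) intervals of nonnegative reals. -/
inductive MTL (AP : Type*) where
  | top : MTL AP
  | bot : MTL AP
  | atom : AP → MTL AP
  | neg : MTL AP → MTL AP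
  | disj : MTL AP → MTL AP → MTL AP
  | conj : MTL AP → MTL AP → MTL AP
  | until_ : MTL AP → MTL AP → Set ℝ≥0 → MTL AP
  | release : MTL AP → MTL AP → Set ℝ≥0 → MTL AP

variable {AP : Type*}

/-- The NEW satisfaction relation: `NSat f φ` means `f ⊨ φ`. -/
def NSat : Signal AP → MTL AP → Prop
  | _, .top => True
  | _, .bot => False
  | f, .atom p => p ∈ f 0
  | f, .neg φ => ¬ NSat f φ
  | f, .disj φ1 φ2 => NSat f φ1 ∨ NSat f φ2
  | f, .conj φ1 φ2 => NSat f φ1 ∧ NSat f φ2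
  | f, .until_ φ1 φ2 I =>
      ∃ t1 ∈ I, NSat (shift f t1) φ2 ∧ ∀ t2 ∈ Set.Ioo 0 t1, NSat (shift f t2) φ1
  | f, .release φ1 φ2 I =>
      (∀ t1 ∈ I, NSat (shift f t1) φ2) ∨
      (∃ t1 : ℝ≥0, 0 < t1 ∧ NSat (shift f t1) φ1 ∧
        ∀ t2 ∈ Set.Ioc 0 t1 ∩ I, NSat (shift f t2) φ2) ∨
      (∃ t1 ∈ I ∪ {sInf I}, ∃ t2 ∈ I, t1 < t2 ∧
        ∀ t3 ∈ I, (t3 ≤ t1 → NSat (shift f t3) φ2) ∧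
          (t1 < t3 → t3 ≤ t2 → NSat (shift f t3) φ1))

/-- Finite variability from the right of a signal `f` with respect to a formula
`φ`, relative to a satisfaction relation `Sat`. -/
def FinVarRight (Sat : Signal AP → MTL AP → Prop) (f : Signal AP) (φ : MTL AP) : Prop :=
  ∀ r : ℝ≥0,
    (∀ ε : ℝ≥0, 0 < ε → ∃ t ∈ Set.Ioo r (r + ε), Sat (shift f t) φ) →
    ∃ ε : ℝ≥0, 0 < ε ∧ ∀ t ∈ Set.Ioo r (r + ε), Sat (shift f t) φ

/-- Finite variability from the left of a signal `f` with respect to a formula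
`φ`, relative to a satisfaction relation `Sat`. -/
def FinVarLeft (Sat : Signal AP → MTL AP → Prop) (f : Signal AP) (φ : MTL AP) : Prop :=
  ∀ r : ℝ≥0, 0 < r →
    (∀ ε ∈ Set.Ioo 0 r, ∃ t ∈ Set.Ioo (r - ε) r, Sat (shift f t) φ) →
    ∃ ε ∈ Set.Ioo 0 r, ∀ t ∈ Set.Ioo (r - ε) r, Sat (shift f t) φ

/-- The OLD satisfaction relation: `OSat f φ` means `f ⊨old φ`. -/
def OSat : Signal AP → MTL AP → Prop
  | _, .top => True
  | _, .bot => False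
  | f, .atom p => p ∈ f 0
  | f, .neg φ => ¬ OSat f φ
  | f, .disj φ1 φ2 => OSat f φ1 ∨ OSat f φ2
  | f, .conj φ1 φ2 => OSat f φ1 ∧ OSat f φ2
  | f, .until_ φ1 φ2 I =>
      ∃ t1 ∈ I, OSat (shift f t1) φ2 ∧ ∀ t2 ∈ Set.Ioo 0 t1, OSat (shift f t2) φ1
  | f, .release φ1 φ2 I =>
      (∀ t1 ∈ I, OSat (shift f t1) φ2) ∨
      (∃ t1 : ℝ≥0, 0 < t1 ∧ OSat (shift f t1) φ1 ∧
        ∀ t2 ∈ Set.Ioc 0 t1 ∩ I, OSat (shift f t2) φ2)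

mutual
/-- The negated normal form of an MTL formula. -/
def nnf : MTL AP → MTL AP
  | .top => .top
  | .bot => .bot
  | .atom p => .atom p
  | .neg φ => nnfNeg φ
  | .disj φ1 φ2 => .disj (nnf φ1) (nnf φ2)
  | .conj φ1 φ2 => .conj (nnf φ1) (nnf φ2)
  | .until_ φ1 φ2 I => .until_ (nnf φ1) (nnf φ2) I
  | .release φ1 φ2 I => .release (nnf φ1) (nnf φ2) I

/-- `nnfNeg φ` is the negated normal form `nnf (¬ φ)`. -/
def nnfNeg : MTL AP → MTL AP
  | .top => .bot
  | .bot => .top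
  | .atom p => .neg (.atom p)
  | .neg φ => nnf φ
  | .disj φ1 φ2 => .conj (nnfNeg φ1) (nnfNeg φ2)
  | .conj φ1 φ2 => .disj (nnfNeg φ1) (nnfNeg φ2)
  | .until_ φ1 φ2 I => .release (nnfNeg φ1) (nnfNeg φ2) I
  | .release φ1 φ2 I => .until_ (nnfNeg φ1) (nnfNeg φ2) I
end

/-- The defined operator `N φ := φ R_(0,∞) φ`. -/
def Next (φ : MTL AP) : MTL AP := .release φ φ (Set.Ioi 0)


private lemma exists_pow_inv_lt {r : ℝ≥0} (hr : 0 < r) : ∃ n : ℕ, ((2:ℝ≥0) ^ n)⁻¹ < r := by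
  obtain ⟨n, hn⟩ := exists_pow_lt_of_lt_one (show (0:ℝ) < r from hr)
    (by norm_num : (2:ℝ)⁻¹ < 1)
  refine ⟨n, ?_⟩
  rw [← NNReal.coe_lt_coe]
  push_cast
  rw [← inv_pow]
  exact hn

private lemma key1 {t1 : ℝ≥0} (ht1 : 0 < t1)
    (h : ∀ t2 ∈ Set.Ioo 0 t1, ∃ n : ℕ, t2 = ((2:ℝ≥0) ^ n)⁻¹) : False := by
  obtain ⟨n, hn⟩ := h (t1 / 2) ⟨by positivity, div_lt_self ht1 one_lt_two⟩
  obtain ⟨m, hm⟩ := h (t1 / 3) ⟨by positivity, div_lt_self ht1 (by norm_num : (1:ℝ≥0) < 3)⟩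
  rw [div_eq_iff (by norm_num : (2:ℝ≥0) ≠ 0)] at hn
  rw [div_eq_iff (by norm_num : (3:ℝ≥0) ≠ 0)] at hm
  have key : ((2:ℝ≥0) ^ n)⁻¹ * 2 = ((2:ℝ≥0) ^ m)⁻¹ * 3 := hn.symm.trans hm
  field_simp at key
  have h3 : 2 * 2 ^ m = 3 * 2 ^ n := by rw [mul_comm 3]; exact_mod_cast key
  have hdvd : (3:ℕ) ∣ 2 ^ (m + 1) := ⟨2 ^ n, by rw [pow_succ, mul_comm ((2:ℕ)^m) 2]; exact h3⟩
  have := Nat.Prime.dvd_of_dvd_pow (by norm_num : Nat.Prime 3) hdvd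
  omega

private lemma key2 {t1 : ℝ≥0} (ht1 : 0 < t1)
    (h : ∀ t2 ∈ Set.Ioo 0 t1, ¬ ∃ n : ℕ, t2 = ((2:ℝ≥0) ^ n)⁻¹) : False := by
  obtain ⟨n, hn⟩ := exists_pow_inv_lt ht1
  exact h _ ⟨by positivity, hn⟩ ⟨n, rfl⟩

section unsat

variable {p q : AP} {g : Signal AP} {δ : ℝ≥0}

private lemma newA (h : NSat g (.release (.atom q) (.atom q) (Set.Ioi 0))) :
    ∃ δ : ℝ≥0, 0 < δ ∧ ∀ t ∈ Set.Ioc 0 δ, q ∈ g t := by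
  simp only [NSat, shift, add_zero] at h
  rcases h with h | ⟨t1, ht1, -, h⟩ | ⟨t1, -, t2, ht2, hlt, h⟩
  · exact ⟨1, one_pos, fun t ht => h t ht.1⟩
  · exact ⟨t1, ht1, fun t ht => h t ⟨ht, ht.1⟩⟩
  · refine ⟨t2, ht2, fun t ht => ?_⟩
    rcases le_or_gt t t1 with hle | hl
    · exact (h t ht.1).1 hle
    · exact (h t ht.1).2 hl ht.2

private lemma newB (hδ : 0 < δ) (hq : ∀ t ∈ Set.Ioc 0 δ, q ∈ g t)
    (h : NSat g (.release (.neg (.atom p)) (.neg (.atom q)) (Set.Ioo 0 1))) :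
    ∃ δ' : ℝ≥0, 0 < δ' ∧ ∀ t ∈ Set.Ioc 0 δ', p ∉ g t := by
  simp only [NSat, shift, add_zero] at h
  rcases h with h | ⟨t1, ht1, -, h⟩ | ⟨t1, -, t2, ht2, hlt, h⟩
  · have htm : min δ 2⁻¹ ∈ Set.Ioo (0:ℝ≥0) 1 :=
      ⟨lt_min hδ (by norm_num), lt_of_le_of_lt (min_le_right _ _) (inv_lt_one_of_one_lt₀ one_lt_two)⟩
    exact absurd (hq _ ⟨htm.1, min_le_left _ _⟩) (h _ htm)
  · have hpos : (0:ℝ≥0) < min (min δ t1) 2⁻¹ :=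
      lt_min (lt_min hδ ht1) (by norm_num)
    have htm : min (min δ t1) 2⁻¹ ∈ Set.Ioo (0:ℝ≥0) 1 :=
      ⟨hpos, lt_of_le_of_lt (min_le_right _ _) (inv_lt_one_of_one_lt₀ one_lt_two)⟩
    refine absurd (hq _ ⟨hpos, le_trans (min_le_left _ _) (min_le_left _ _)⟩)
      (h _ ⟨⟨hpos, le_trans (min_le_left _ _) (min_le_right _ _)⟩, htm⟩)
  · rcases eq_zero_or_pos t1 with rfl | ht1pos
    · refine ⟨t2, ht2.1, fun t ht => ?_⟩
      exact (h t ⟨ht.1, lt_of_le_of_lt ht.2 ht2.2⟩).2 ht.1 ht.2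
    · have htm : min δ t1 ∈ Set.Ioo (0:ℝ≥0) 1 :=
        ⟨lt_min hδ ht1pos, lt_of_le_of_lt (min_le_right _ _) (lt_trans hlt ht2.2)⟩
      exact absurd (hq _ ⟨htm.1, min_le_left _ _⟩) ((h _ htm).1 (min_le_right _ _))

private lemma newC (hδ : 0 < δ) (hq : ∀ t ∈ Set.Ioc 0 δ, q ∈ g t)
    (h : NSat g (.release (.atom p) (.neg (.atom q)) (Set.Ioo 0 1))) :
    ∃ δ' : ℝ≥0, 0 < δ' ∧ ∀ t ∈ Set.Ioc 0 δ', p ∈ g t := by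
  simp only [NSat, shift, add_zero] at h
  rcases h with h | ⟨t1, ht1, -, h⟩ | ⟨t1, -, t2, ht2, hlt, h⟩
  · have htm : min δ 2⁻¹ ∈ Set.Ioo (0:ℝ≥0) 1 :=
      ⟨lt_min hδ (by norm_num), lt_of_le_of_lt (min_le_right _ _) (inv_lt_one_of_one_lt₀ one_lt_two)⟩
    exact absurd (hq _ ⟨htm.1, min_le_left _ _⟩) (h _ htm)
  · have hpos : (0:ℝ≥0) < min (min δ t1) 2⁻¹ :=
      lt_min (lt_min hδ ht1) (by norm_num)
    have htm : min (min δ t1) 2⁻¹ ∈ Set.Ioo (0:ℝ≥0) 1 :=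
      ⟨hpos, lt_of_le_of_lt (min_le_right _ _) (inv_lt_one_of_one_lt₀ one_lt_two)⟩
    refine absurd (hq _ ⟨hpos, le_trans (min_le_left _ _) (min_le_left _ _)⟩)
      (h _ ⟨⟨hpos, le_trans (min_le_left _ _) (min_le_right _ _)⟩, htm⟩)
  · rcases eq_zero_or_pos t1 with rfl | ht1pos
    · refine ⟨t2, ht2.1, fun t ht => ?_⟩
      exact (h t ⟨ht.1, lt_of_le_of_lt ht.2 ht2.2⟩).2 ht.1 ht.2
    · have htm : min δ t1 ∈ Set.Ioo (0:ℝ≥0) 1 :=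
        ⟨lt_min hδ ht1pos, lt_of_le_of_lt (min_le_right _ _) (lt_trans hlt ht2.2)⟩
      exact absurd (hq _ ⟨htm.1, min_le_left _ _⟩) ((h _ htm).1 (min_le_right _ _))

private lemma oldA (h : OSat g (.release (.atom q) (.atom q) (Set.Ioi 0))) :
    ∃ δ : ℝ≥0, 0 < δ ∧ ∀ t ∈ Set.Ioc 0 δ, q ∈ g t := by
  simp only [OSat, shift, add_zero] at h
  rcases h with h | ⟨t1, ht1, -, h⟩
  · exact ⟨1, one_pos, fun t ht => h t ht.1⟩
  · exact ⟨t1, ht1, fun t ht => h t ⟨ht, ht.1⟩⟩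

private lemma oldB (hδ : 0 < δ) (hq : ∀ t ∈ Set.Ioc 0 δ, q ∈ g t)
    (h : OSat g (.release (.neg (.atom p)) (.neg (.atom q)) (Set.Ioo 0 1))) : False := by
  simp only [OSat, shift, add_zero] at h
  rcases h with h | ⟨t1, ht1, -, h⟩
  · have htm : min δ 2⁻¹ ∈ Set.Ioo (0:ℝ≥0) 1 :=
      ⟨lt_min hδ (by norm_num), lt_of_le_of_lt (min_le_right _ _) (inv_lt_one_of_one_lt₀ one_lt_two)⟩
    exact absurd (hq _ ⟨htm.1, min_le_left _ _⟩) (h _ htm)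
  · have hpos : (0:ℝ≥0) < min (min δ t1) 2⁻¹ :=
      lt_min (lt_min hδ ht1) (by norm_num)
    have htm : min (min δ t1) 2⁻¹ ∈ Set.Ioo (0:ℝ≥0) 1 :=
      ⟨hpos, lt_of_le_of_lt (min_le_right _ _) (inv_lt_one_of_one_lt₀ one_lt_two)⟩
    exact absurd (hq _ ⟨hpos, le_trans (min_le_left _ _) (min_le_left _ _)⟩)
      (h _ ⟨⟨hpos, le_trans (min_le_left _ _) (min_le_right _ _)⟩, htm⟩)

end unsat

theorem fvar_left_not_enough (p q : AP) (hpq : p ≠ q)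
    (f : Signal AP)
    (hf : f = fun t => {a : AP | a = q ∨ (a = p ∧ ∃ n : ℕ, t = ((2 : ℝ≥0) ^ n)⁻¹)})
    (φ : MTL AP)
    (hφ : φ = .conj (.conj (Next (.atom q))
        (.neg (.until_ (.atom p) (.atom q) (Set.Ioo 0 1))))
      (.neg (.until_ (.neg (.atom p)) (.atom q) (Set.Ioo 0 1)))) :
    (∀ a : AP, FinVarLeft NSat f (.atom a)) ∧
    (NSat f φ ∧ OSat f φ) ∧
    (nnf φ = .conj (.conj (.release (.atom q) (.atom q) (Set.Ioi 0))
        (.release (.neg (.atom p)) (.neg (.atom q)) (Set.Ioo 0 1)))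
      (.release (.atom p) (.neg (.atom q)) (Set.Ioo 0 1)) ∧
      (∀ g : Signal AP, ¬ NSat g (nnf φ)) ∧
      (∀ g : Signal AP, ¬ OSat g (nnf φ))) := by
  subst hf hφ
  have hnnf : nnf (MTL.conj (.conj (Next (.atom q))
        (.neg (.until_ (.atom p) (.atom q) (Set.Ioo 0 1))))
      (.neg (.until_ (.neg (.atom p)) (.atom q) (Set.Ioo 0 1))) : MTL AP)
      = .conj (.conj (.release (.atom q) (.atom q) (Set.Ioi 0))
        (.release (.neg (.atom p)) (.neg (.atom q)) (Set.Ioo 0 1)))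
      (.release (.atom p) (.neg (.atom q)) (Set.Ioo 0 1)) := by
    simp [nnf, nnfNeg, Next]
  refine ⟨?_, ⟨?_, ?_⟩, hnnf, ?_, ?_⟩
  · -- finite variability from the left
    intro a r hr hyp
    by_cases haq : a = q
    · refine ⟨r / 2, ⟨by positivity, div_lt_self hr one_lt_two⟩, fun t _ => ?_⟩
      exact Or.inl haq
    · exfalso
      classical
      have hex := exists_pow_inv_lt hr
      have hc : ((2:ℝ≥0) ^ Nat.find hex)⁻¹ < r := Nat.find_spec hex
      have hcpos : (0:ℝ≥0) < ((2:ℝ≥0) ^ Nat.find hex)⁻¹ := by positivity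
      obtain ⟨t, ht, hsat⟩ := hyp (r - ((2:ℝ≥0) ^ Nat.find hex)⁻¹)
        ⟨tsub_pos_of_lt hc, tsub_lt_self hr hcpos⟩
      rw [tsub_tsub_cancel_of_le hc.le] at ht
      simp only [NSat, shift, add_zero, Set.mem_setOf_eq] at hsat
      rcases hsat with rfl | ⟨-, n, rfl⟩
      · exact haq rfl
      · have hmn : Nat.find hex ≤ n := Nat.find_min' hex ht.2
        have hle : ((2:ℝ≥0) ^ n)⁻¹ ≤ ((2:ℝ≥0) ^ Nat.find hex)⁻¹ := by
          gcongr
          exact one_le_two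
        exact absurd ht.1 (not_lt.2 hle)
  · -- NSat
    refine ⟨⟨Or.inl fun t _ => Or.inl rfl, ?_⟩, ?_⟩
    · rintro ⟨t1, ht1, -, hall⟩
      refine key1 ht1.1 fun t2 ht2 => ?_
      have h' := hall t2 ht2
      simp only [NSat, shift, add_zero, Set.mem_setOf_eq] at h'
      rcases h' with h' | ⟨-, hn⟩
      · exact absurd h' hpq
      · exact hn
    · rintro ⟨t1, ht1, -, hall⟩
      refine key2 ht1.1 fun t2 ht2 hex => ?_
      have h' := hall t2 ht2
      simp only [NSat, shift, add_zero, Set.mem_setOf_eq] at h'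
      exact h' (Or.inr ⟨by trivial, hex⟩)
  · -- OSat
    refine ⟨⟨Or.inl fun t _ => Or.inl rfl, ?_⟩, ?_⟩
    · rintro ⟨t1, ht1, -, hall⟩
      refine key1 ht1.1 fun t2 ht2 => ?_
      have h' := hall t2 ht2
      simp only [OSat, shift, add_zero, Set.mem_setOf_eq] at h'
      rcases h' with h' | ⟨-, hn⟩
      · exact absurd h' hpq
      · exact hn
    · rintro ⟨t1, ht1, -, hall⟩
      refine key2 ht1.1 fun t2 ht2 hex => ?_
      have h' := hall t2 ht2
      simp only [OSat, shift, add_zero, Set.mem_setOf_eq] at h'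
      exact h' (Or.inr ⟨by trivial, hex⟩)
  · -- NSat unsat
    intro g hg
    rw [hnnf] at hg
    obtain ⟨⟨hA, hB⟩, hC⟩ := hg
    obtain ⟨δ, hδ, hq⟩ := newA hA
    obtain ⟨δ1, hδ1, h1⟩ := newB hδ hq hB
    obtain ⟨δ2, hδ2, h2⟩ := newC hδ hq hC
    exact h1 (min δ1 δ2) ⟨lt_min hδ1 hδ2, min_le_left _ _⟩
      (h2 _ ⟨lt_min hδ1 hδ2, min_le_right _ _⟩)
  · -- OSat unsat
    intro g hg
    rw [hnnf] at hg
    obtain ⟨⟨hA, hB⟩, -⟩ := hg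
    obtain ⟨δ, hδ, hq⟩ := oldA hA
    exact oldB hδ hq hB

end MITL
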